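/- (Elementary Darboux transformation eDT-II.) Let α, β, α₂, β₂ ∈ A₁ and let p₂ ∈ A₀ with Dp₂ = 0. Then the Darboux covariance condition (D E₂(λ, p₂; α₂, β)) + E₂(λ, p₂; α₂, β)†·L(λ; α, β) − L(λ; α₂, β₂)·E₂(λ, p₂; α₂, β) = 0 holds identically in λ if and only if the elementary Bäcklund transformation holds: α₂,ₓ = α(α₂β − 1) + α₂((Dα₂)(Dβ) − p₂²) and β₂ = β_x(1 + α₂β) + β((Dα₂)(Dβ) − p₂²). -/

import Mathlib

open Polynomial Matrix

/-- A supercommutative superalgebra `A = A₀ ⊕ A₁` over `ℂ`. -/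
structure SuperAlgebra (A : Type*) [Ring A] [Algebra ℂ A] where
  A0 : Submodule ℂ A
  A1 : Submodule ℂ A
  isCompl : IsCompl A0 A1
  algebraMap_mem : ∀ c : ℂ, algebraMap ℂ A c ∈ A0
  mul_mem00 : ∀ {a b : A}, a ∈ A0 → b ∈ A0 → a * b ∈ A0
  mul_mem01 : ∀ {a b : A}, a ∈ A0 → b ∈ A1 → a * b ∈ A1
  mul_mem10 : ∀ {a b : A}, a ∈ A1 → b ∈ A0 → a * b ∈ A1
  mul_mem11 : ∀ {a b : A}, a ∈ A1 → b ∈ A1 → a * b ∈ A0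
  even_comm : ∀ {a : A}, a ∈ A0 → ∀ b : A, a * b = b * a
  odd_anticomm : ∀ {a b : A}, a ∈ A1 → b ∈ A1 → a * b = -(b * a)

/-- An odd superderivation `D` on a superalgebra: `D(ab) = (Da)b + a†(Db)`. -/
structure OddDerivation {A : Type*} [Ring A] [Algebra ℂ A] (S : SuperAlgebra A) where
  D : A →ₗ[ℂ] A
  map_even : ∀ {a : A}, a ∈ S.A0 → D a ∈ S.A1
  map_odd : ∀ {a : A}, a ∈ S.A1 → D a ∈ S.A0
  leibniz_even : ∀ {a : A}, a ∈ S.A0 → ∀ b : A, D (a * b) = D a * b + a * D b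
  leibniz_odd : ∀ {a : A}, a ∈ S.A1 → ∀ b : A, D (a * b) = D a * b - a * D b

/-- An even (parity preserving) `ℂ`-linear derivation on a superalgebra. -/
structure EvenDerivation {A : Type*} [Ring A] [Algebra ℂ A] (S : SuperAlgebra A) where
  D : A →ₗ[ℂ] A
  map_even : ∀ {a : A}, a ∈ S.A0 → D a ∈ S.A0
  map_odd : ∀ {a : A}, a ∈ S.A1 → D a ∈ S.A1
  leibniz : ∀ a b : A, D (a * b) = D a * b + a * D b

/-- Apply a map coefficientwise to a polynomial (extension of a derivation to
polynomials in the central even indeterminate `λ = X`). -/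
noncomputable def cwise {A : Type*} [Ring A] (f : A → A) (P : Polynomial A) : Polynomial A :=
  P.sum fun n a => Polynomial.monomial n (f a)

/-- The entrywise super-parity involution `M ↦ M†` for `3 × 3` matrices having the
standard parity pattern (even entries at `(1,1), (1,2), (2,1), (2,2), (3,3)`; odd entries
at `(1,3), (2,3), (3,1), (3,2)`): it negates exactly the odd positions. -/
def sdag {R : Type*} [Ring R] (M : Matrix (Fin 3) (Fin 3) R) : Matrix (Fin 3) (Fin 3) R :=
  Matrix.of fun i j => if (i = 2 ∧ j ≠ 2) ∨ (i ≠ 2 ∧ j = 2) then -M i j else M i j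

/-- The SUSY AKNS spectral matrix `L(λ; α, β)`, with rows `[0, α, 0], [β, 0, λ], [0, λ, 0]`. -/
def Lgen {R : Type*} [Ring R] (lam a b : R) : Matrix (Fin 3) (Fin 3) R :=
  !![0, a, 0; b, 0, lam; 0, lam, 0]

/-- `L(λ; α, β)` with entries polynomial in the indeterminate `λ = X`. -/
noncomputable def Lpoly {A : Type*} [Ring A] (a b : A) : Matrix (Fin 3) (Fin 3) (Polynomial A) :=
  Lgen (X : Polynomial A) (C a) (C b)

/-- The elementary Darboux matrix `E₁(λ, p; a, b)` (the gauge matrix of eDT-I), with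
`da, db` standing for `Da, Db`. -/
def E1gen {R : Type*} [Ring R] (lam p a b da db : R) : Matrix (Fin 3) (Fin 3) R :=
  !![lam ^ 2 + (1 + a * b) * (da * db - p ^ 2), -da, lam * a;
     -db, 1 - a * b, 0;
     -(lam * b), 0, 1]

/-- The elementary Darboux matrix `E₂(λ, p; a, b)` (the gauge matrix of eDT-II). -/
def E2gen {R : Type*} [Ring R] (lam p a b da db : R) : Matrix (Fin 3) (Fin 3) R :=
  !![1 - a * b, da, -(lam * a);
     db, (1 + a * b) * (lam ^ 2 - p ^ 2 + da * db), -(lam * (a * db));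
     lam * b, lam * (b * da), lam ^ 2 * (1 + a * b) - p ^ 2]

/-- `E₁(λ, p; a, b)` with entries polynomial in `λ = X`. -/
noncomputable def E1poly {A : Type*} [Ring A] (D : A → A) (p a b : A) :
    Matrix (Fin 3) (Fin 3) (Polynomial A) :=
  E1gen (X : Polynomial A) (C p) (C a) (C b) (C (D a)) (C (D b))

/-- `E₂(λ, p; a, b)` with entries polynomial in `λ = X`. -/
noncomputable def E2poly {A : Type*} [Ring A] (D : A → A) (p a b : A) :
    Matrix (Fin 3) (Fin 3) (Polynomial A) :=
  E2gen (X : Polynomial A) (C p) (C a) (C b) (C (D a)) (C (D b))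

section helpers
variable {A : Type*} [Ring A]

lemma cwise_monomial (f : A → A) (h0 : f 0 = 0) (n : ℕ) (a : A) :
    cwise f (monomial n a) = monomial n (f a) := by
  unfold cwise
  rw [Polynomial.sum_monomial_index]
  simp [h0]

lemma cwise_C (f : A → A) (h0 : f 0 = 0) (a : A) : cwise f (C a) = C (f a) := by
  rw [← Polynomial.monomial_zero_left, cwise_monomial f h0, Polynomial.monomial_zero_left]

lemma cwise_CXpow (f : A → A) (h0 : f 0 = 0) (n : ℕ) (a : A) :
    cwise f (C a * X ^ n) = C (f a) * X ^ n := by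
  rw [Polynomial.C_mul_X_pow_eq_monomial, cwise_monomial f h0,
    ← Polynomial.C_mul_X_pow_eq_monomial]

lemma cwise_add (f : A → A) (h0 : f 0 = 0) (hadd : ∀ x y, f (x + y) = f x + f y)
    (P Q : A[X]) : cwise f (P + Q) = cwise f P + cwise f Q := by
  unfold cwise
  rw [Polynomial.sum_add_index] <;> simp [h0, hadd]

lemma m0 (a b : A) : (C a : A[X]) * C b = C (a * b) := (Polynomial.C_mul).symm

lemma m1 (a b : A) (n : ℕ) : (C a : A[X]) * (C b * X ^ n) = C (a * b) * X ^ n := by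
  rw [← mul_assoc, m0]

lemma m2 (a b : A) (n : ℕ) : ((C a : A[X]) * X ^ n) * C b = C (a * b) * X ^ n := by
  rw [mul_assoc, X_pow_mul, ← mul_assoc, m0]

lemma m3 (a b : A) (n m : ℕ) :
    ((C a : A[X]) * X ^ n) * (C b * X ^ m) = C (a * b) * X ^ (n + m) := by
  rw [mul_assoc, ← mul_assoc (X ^ n), X_pow_mul, mul_assoc, ← pow_add, ← mul_assoc, m0]

lemma q1 (a : A) : (C a : A[X]) * X = C a * X ^ 1 := by rw [pow_one]

lemma q2 (a : A) (n : ℕ) : ((C a : A[X]) * X ^ n) * X = C a * X ^ (n + 1) := by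
  rw [mul_assoc, ← pow_succ]

lemma q3 (a : A) : (X : A[X]) * C a = C a * X ^ 1 := by rw [pow_one, X_mul]

lemma q4 (a : A) (n : ℕ) : (X : A[X]) * (C a * X ^ n) = C a * X ^ (n + 1) := by
  rw [← mul_assoc, X_mul, mul_assoc, ← pow_succ']

end helpers

section matlits
variable {R : Type*} [Ring R]

lemma addM (a b c d e f g h i a' b' c' d' e' f' g' h' i' : R) :
    !![a,b,c;d,e,f;g,h,i] + !![a',b',c';d',e',f';g',h',i'] =
    !![a+a',b+b',c+c';d+d',e+e',f+f';g+g',h+h',i+i'] := by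
  refine Matrix.ext fun x y => ?_
  fin_cases x <;> fin_cases y <;> simp

lemma subM (a b c d e f g h i a' b' c' d' e' f' g' h' i' : R) :
    !![a,b,c;d,e,f;g,h,i] - !![a',b',c';d',e',f';g',h',i'] =
    !![a-a',b-b',c-c';d-d',e-e',f-f';g-g',h-h',i-i'] := by
  refine Matrix.ext fun x y => ?_
  fin_cases x <;> fin_cases y <;> simp

lemma sdagM (a b c d e f g h i : R) :
    sdag !![a,b,c;d,e,f;g,h,i] = !![a,b,-c;d,e,-f;-g,-h,i] := by
  refine Matrix.ext fun x y => ?_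
  fin_cases x <;> fin_cases y <;> simp [sdag]

lemma mapM3 (f : R → R) (a b c d e f' g h i : R) :
    (!![a,b,c;d,e,f';g,h,i]).map f = !![f a,f b,f c;f d,f e,f f';f g,f h,f i] := by
  refine Matrix.ext fun x y => ?_
  fin_cases x <;> fin_cases y <;> simp

end matlits

section matlits2
variable {R : Type*} [Ring R]

lemma zeroM : (0 : Matrix (Fin 3) (Fin 3) R) = !![0,0,0;0,0,0;0,0,0] := by
  refine Matrix.ext fun x y => ?_
  fin_cases x <;> fin_cases y <;> simp [Matrix.vecHead, Matrix.vecTail]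

lemma eqM {a b c d e f g h i a' b' c' d' e' f' g' h' i' : R}
    (h1 : a = a') (h2 : b = b') (h3 : c = c') (h4 : d = d') (h5 : e = e') (h6 : f = f')
    (h7 : g = g') (h8 : h = h') (h9 : i = i') :
    !![a,b,c;d,e,f;g,h,i] = !![a',b',c';d',e',f';g',h',i'] := by
  subst h1 h2 h3 h4 h5 h6 h7 h8 h9; rfl

end matlits2

set_option maxRecDepth 100000 in
set_option maxHeartbeats 2000000 in
/-- **eDT-II.** The Darboux covariance condition
`(DE₂) + E₂†·L(λ; α, β) − L(λ; α₂, β₂)·E₂ = 0` holds identically in `λ` iff the elementary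
Bäcklund transformation `α₂,ₓ = α(α₂β − 1) + α₂((Dα₂)(Dβ) − p₂²)`,
`β₂ = β_x(1 + α₂β) + β((Dα₂)(Dβ) − p₂²)` holds (here `a_x = D(Da)`). -/
theorem eDT2_covariance_iff_backlund {A : Type*} [Ring A] [Algebra ℂ A]
    (S : SuperAlgebra A) (𝒟 : OddDerivation S)
    (α β α₂ β₂ : A) (hα : α ∈ S.A1) (hβ : β ∈ S.A1) (hα₂ : α₂ ∈ S.A1) (hβ₂ : β₂ ∈ S.A1)
    (p₂ : A) (hp₂ : p₂ ∈ S.A0) (hDp₂ : 𝒟.D p₂ = 0) :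
    ((E2poly (fun a => 𝒟.D a) p₂ α₂ β).map (cwise fun a => 𝒟.D a)
        + sdag (E2poly (fun a => 𝒟.D a) p₂ α₂ β) * Lpoly α β
        - Lpoly α₂ β₂ * E2poly (fun a => 𝒟.D a) p₂ α₂ β = 0)
      ↔ (𝒟.D (𝒟.D α₂) = α * (α₂ * β - 1) + α₂ * ((𝒟.D α₂) * (𝒟.D β) - p₂ ^ 2)
          ∧ β₂ = (𝒟.D (𝒟.D β)) * (1 + α₂ * β) + β * ((𝒟.D α₂) * (𝒟.D β) - p₂ ^ 2)) := by
  
  have h1mem : (1 : A) ∈ S.A0 := by simpa using S.algebraMap_mem 1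
  have hD1 : 𝒟.D 1 = 0 := by
    have := 𝒟.leibniz_even h1mem 1
    simpa using this.symm
  have oddsq : ∀ x : A, x ∈ S.A1 → x * x = 0 := by
    intro x hx
    have h := S.odd_anticomm hx hx
    have h2 : x * x + x * x = 0 := by nth_rewrite 1 [h]; exact neg_add_cancel _
    calc x*x = (1:ℂ) • (x*x) := (one_smul ℂ _).symm
      _ = ((2⁻¹ * 2 : ℂ)) • (x*x) := by norm_num
      _ = (2⁻¹:ℂ) • ((2:ℂ) • (x*x)) := by rw [smul_smul]
      _ = (2⁻¹:ℂ) • ((x*x) + (x*x)) := by rw [two_smul]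
      _ = (2⁻¹:ℂ) • (0:A) := by rw [h2]
      _ = 0 := smul_zero _
  have hBm : 𝒟.D β ∈ S.A0 := 𝒟.map_odd hβ
  have hCm : 𝒟.D α₂ ∈ S.A0 := 𝒟.map_odd hα₂
  have hxbm : 𝒟.D (𝒟.D β) ∈ S.A1 := 𝒟.map_even hBm
  have hxcm : 𝒟.D (𝒟.D α₂) ∈ S.A1 := 𝒟.map_even hCm
  have ev_B : ∀ y : A, 𝒟.D β * y = y * 𝒟.D β := S.even_comm hBm
  have ev_C : ∀ y : A, 𝒟.D α₂ * y = y * 𝒟.D α₂ := S.even_comm hCm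
  have ev_p : ∀ y : A, p₂ * y = y * p₂ := S.even_comm hp₂
  have zq_a : α * α = 0 := oddsq _ hα
  have nac_ba : β * α = -(α * β) := S.odd_anticomm hβ hα
  have zq_b : β * β = 0 := oddsq _ hβ
  have nac_ca : α₂ * α = -(α * α₂) := S.odd_anticomm hα₂ hα
  have nac_cb : α₂ * β = -(β * α₂) := S.odd_anticomm hα₂ hβ
  have zq_c : α₂ * α₂ = 0 := oddsq _ hα₂
  have nac_da : β₂ * α = -(α * β₂) := S.odd_anticomm hβ₂ hα
  have nac_db : β₂ * β = -(β * β₂) := S.odd_anticomm hβ₂ hβ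
  have nac_dc : β₂ * α₂ = -(α₂ * β₂) := S.odd_anticomm hβ₂ hα₂
  have zq_d : β₂ * β₂ = 0 := oddsq _ hβ₂
  have nac_xba : (𝒟.D (𝒟.D β)) * α = -(α * (𝒟.D (𝒟.D β))) := S.odd_anticomm hxbm hα
  have nac_xbb : (𝒟.D (𝒟.D β)) * β = -(β * (𝒟.D (𝒟.D β))) := S.odd_anticomm hxbm hβ
  have nac_xbc : (𝒟.D (𝒟.D β)) * α₂ = -(α₂ * (𝒟.D (𝒟.D β))) := S.odd_anticomm hxbm hα₂
  have nac_xbd : (𝒟.D (𝒟.D β)) * β₂ = -(β₂ * (𝒟.D (𝒟.D β))) := S.odd_anticomm hxbm hβ₂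
  have zq_xb : (𝒟.D (𝒟.D β)) * (𝒟.D (𝒟.D β)) = 0 := oddsq _ hxbm
  have nac_xca : (𝒟.D (𝒟.D α₂)) * α = -(α * (𝒟.D (𝒟.D α₂))) := S.odd_anticomm hxcm hα
  have nac_xcb : (𝒟.D (𝒟.D α₂)) * β = -(β * (𝒟.D (𝒟.D α₂))) := S.odd_anticomm hxcm hβ
  have nac_xcc : (𝒟.D (𝒟.D α₂)) * α₂ = -(α₂ * (𝒟.D (𝒟.D α₂))) := S.odd_anticomm hxcm hα₂
  have nac_xcd : (𝒟.D (𝒟.D α₂)) * β₂ = -(β₂ * (𝒟.D (𝒟.D α₂))) := S.odd_anticomm hxcm hβ₂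
  have nac_xcxb : (𝒟.D (𝒟.D α₂)) * (𝒟.D (𝒟.D β)) = -((𝒟.D (𝒟.D β)) * (𝒟.D (𝒟.D α₂))) := S.odd_anticomm hxcm hxbm
  have zq_xc : (𝒟.D (𝒟.D α₂)) * (𝒟.D (𝒟.D α₂)) = 0 := oddsq _ hxcm
  have pev_B : ∀ y : A, (C (𝒟.D β) : A[X]) * C y = C y * C (𝒟.D β) := fun y => by
    rw [← _root_.map_mul, ev_B y, _root_.map_mul]
  have pev_C : ∀ y : A, (C (𝒟.D α₂) : A[X]) * C y = C y * C (𝒟.D α₂) := fun y => by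
    rw [← _root_.map_mul, ev_C y, _root_.map_mul]
  have pev_p : ∀ y : A, (C p₂ : A[X]) * C y = C y * C p₂ := fun y => by
    rw [← _root_.map_mul, ev_p y, _root_.map_mul]
  have pzq_a : (C α : A[X]) * C α = 0 := by
    rw [← _root_.map_mul, zq_a, _root_.map_zero]
  have pac_ba : (C β : A[X]) * C α = -(C α * C β) := by
    rw [← _root_.map_mul, nac_ba, _root_.map_neg, _root_.map_mul]
  have pzq_b : (C β : A[X]) * C β = 0 := by
    rw [← _root_.map_mul, zq_b, _root_.map_zero]
  have pac_ca : (C α₂ : A[X]) * C α = -(C α * C α₂) := by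
    rw [← _root_.map_mul, nac_ca, _root_.map_neg, _root_.map_mul]
  have pac_cb : (C α₂ : A[X]) * C β = -(C β * C α₂) := by
    rw [← _root_.map_mul, nac_cb, _root_.map_neg, _root_.map_mul]
  have pzq_c : (C α₂ : A[X]) * C α₂ = 0 := by
    rw [← _root_.map_mul, zq_c, _root_.map_zero]
  have pac_da : (C β₂ : A[X]) * C α = -(C α * C β₂) := by
    rw [← _root_.map_mul, nac_da, _root_.map_neg, _root_.map_mul]
  have pac_db : (C β₂ : A[X]) * C β = -(C β * C β₂) := by
    rw [← _root_.map_mul, nac_db, _root_.map_neg, _root_.map_mul]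
  have pac_dc : (C β₂ : A[X]) * C α₂ = -(C α₂ * C β₂) := by
    rw [← _root_.map_mul, nac_dc, _root_.map_neg, _root_.map_mul]
  have pzq_d : (C β₂ : A[X]) * C β₂ = 0 := by
    rw [← _root_.map_mul, zq_d, _root_.map_zero]
  have pac_xba : (C (𝒟.D (𝒟.D β)) : A[X]) * C α = -(C α * C (𝒟.D (𝒟.D β))) := by
    rw [← _root_.map_mul, nac_xba, _root_.map_neg, _root_.map_mul]
  have pac_xbb : (C (𝒟.D (𝒟.D β)) : A[X]) * C β = -(C β * C (𝒟.D (𝒟.D β))) := by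
    rw [← _root_.map_mul, nac_xbb, _root_.map_neg, _root_.map_mul]
  have pac_xbc : (C (𝒟.D (𝒟.D β)) : A[X]) * C α₂ = -(C α₂ * C (𝒟.D (𝒟.D β))) := by
    rw [← _root_.map_mul, nac_xbc, _root_.map_neg, _root_.map_mul]
  have pac_xbd : (C (𝒟.D (𝒟.D β)) : A[X]) * C β₂ = -(C β₂ * C (𝒟.D (𝒟.D β))) := by
    rw [← _root_.map_mul, nac_xbd, _root_.map_neg, _root_.map_mul]
  have pzq_xb : (C (𝒟.D (𝒟.D β)) : A[X]) * C (𝒟.D (𝒟.D β)) = 0 := by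
    rw [← _root_.map_mul, zq_xb, _root_.map_zero]
  have pac_xca : (C (𝒟.D (𝒟.D α₂)) : A[X]) * C α = -(C α * C (𝒟.D (𝒟.D α₂))) := by
    rw [← _root_.map_mul, nac_xca, _root_.map_neg, _root_.map_mul]
  have pac_xcb : (C (𝒟.D (𝒟.D α₂)) : A[X]) * C β = -(C β * C (𝒟.D (𝒟.D α₂))) := by
    rw [← _root_.map_mul, nac_xcb, _root_.map_neg, _root_.map_mul]
  have pac_xcc : (C (𝒟.D (𝒟.D α₂)) : A[X]) * C α₂ = -(C α₂ * C (𝒟.D (𝒟.D α₂))) := by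
    rw [← _root_.map_mul, nac_xcc, _root_.map_neg, _root_.map_mul]
  have pac_xcd : (C (𝒟.D (𝒟.D α₂)) : A[X]) * C β₂ = -(C β₂ * C (𝒟.D (𝒟.D α₂))) := by
    rw [← _root_.map_mul, nac_xcd, _root_.map_neg, _root_.map_mul]
  have pac_xcxb : (C (𝒟.D (𝒟.D α₂)) : A[X]) * C (𝒟.D (𝒟.D β)) = -(C (𝒟.D (𝒟.D β)) * C (𝒟.D (𝒟.D α₂))) := by
    rw [← _root_.map_mul, nac_xcxb, _root_.map_neg, _root_.map_mul]
  have pzq_xc : (C (𝒟.D (𝒟.D α₂)) : A[X]) * C (𝒟.D (𝒟.D α₂)) = 0 := by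
    rw [← _root_.map_mul, zq_xc, _root_.map_zero]
  have hDp2 : 𝒟.D (p₂ ^ 2) = 0 := by
    rw [sq, 𝒟.leibniz_even hp₂ p₂, hDp₂]; simp
  have hDCB : 𝒟.D (𝒟.D α₂ * 𝒟.D β) = 𝒟.D (𝒟.D α₂) * 𝒟.D β + 𝒟.D α₂ * 𝒟.D (𝒟.D β) :=
    𝒟.leibniz_even hCm _
  have hCBt : 𝒟.D (𝒟.D α₂ * 𝒟.D β - p₂ ^ 2) = 𝒟.D (𝒟.D α₂) * 𝒟.D β + 𝒟.D α₂ * 𝒟.D (𝒟.D β) := by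
    rw [map_sub, hDCB, hDp2, sub_zero]
  have hcbm : α₂ * β ∈ S.A0 := S.mul_mem11 hα₂ hβ
  have hE00 : 𝒟.D (1 - α₂ * β) = -(𝒟.D α₂ * β) + α₂ * 𝒟.D β := by
    rw [map_sub, hD1, 𝒟.leibniz_odd hα₂ β]; noncomm_ring
  have hE02 : 𝒟.D (-α₂) = -(𝒟.D α₂) := map_neg _ _
  have hE11B : 𝒟.D (1 + α₂ * β) = 𝒟.D α₂ * β - α₂ * 𝒟.D β := by
    rw [map_add, hD1, 𝒟.leibniz_odd hα₂ β, zero_add]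
  have hE11A : 𝒟.D (𝒟.D α₂ * 𝒟.D β - p₂ ^ 2 + α₂ * β * (𝒟.D α₂ * 𝒟.D β - p₂ ^ 2)) =
      (𝒟.D (𝒟.D α₂) * 𝒟.D β + 𝒟.D α₂ * 𝒟.D (𝒟.D β)) +
        ((𝒟.D α₂ * β - α₂ * 𝒟.D β) * (𝒟.D α₂ * 𝒟.D β - p₂ ^ 2) +
          α₂ * β * (𝒟.D (𝒟.D α₂) * 𝒟.D β + 𝒟.D α₂ * 𝒟.D (𝒟.D β))) := by
    rw [map_add, hCBt, 𝒟.leibniz_even hcbm, hCBt, 𝒟.leibniz_odd hα₂ β]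
  have hE12 : 𝒟.D (-(α₂ * 𝒟.D β)) = -(𝒟.D α₂ * 𝒟.D β - α₂ * 𝒟.D (𝒟.D β)) := by
    rw [map_neg, 𝒟.leibniz_odd hα₂ (𝒟.D β)]
  have hE21 : 𝒟.D (β * 𝒟.D α₂) = 𝒟.D β * 𝒟.D α₂ - β * 𝒟.D (𝒟.D α₂) := 𝒟.leibniz_odd hβ _
  have hE22A : 𝒟.D (-p₂ ^ 2) = 0 := by rw [map_neg, hDp2, neg_zero]
  have pE00 : (C (𝒟.D (1 - α₂ * β)) : A[X]) = -(C (𝒟.D α₂) * C β) + C α₂ * C (𝒟.D β) := by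
    rw [hE00]; simp only [Polynomial.C_add, Polynomial.C_neg, Polynomial.C_mul]
  have pE02 : (C (𝒟.D (-α₂)) : A[X]) = -(C (𝒟.D α₂)) := by rw [hE02, Polynomial.C_neg]
  have pE11B : (C (𝒟.D (1 + α₂ * β)) : A[X]) = C (𝒟.D α₂) * C β - C α₂ * C (𝒟.D β) := by
    rw [hE11B]; simp only [Polynomial.C_sub, Polynomial.C_mul]
  have pE11A : (C (𝒟.D (𝒟.D α₂ * 𝒟.D β - p₂ ^ 2 + α₂ * β * (𝒟.D α₂ * 𝒟.D β - p₂ ^ 2))) : A[X]) =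
      (C (𝒟.D (𝒟.D α₂)) * C (𝒟.D β) + C (𝒟.D α₂) * C (𝒟.D (𝒟.D β))) +
        ((C (𝒟.D α₂) * C β - C α₂ * C (𝒟.D β)) * (C (𝒟.D α₂) * C (𝒟.D β) - C p₂ ^ 2) +
          C α₂ * C β * (C (𝒟.D (𝒟.D α₂)) * C (𝒟.D β) + C (𝒟.D α₂) * C (𝒟.D (𝒟.D β)))) := by
    rw [hE11A]; simp only [Polynomial.C_add, Polynomial.C_sub, Polynomial.C_mul, Polynomial.C_pow]
  have pE12 : (C (𝒟.D (-(α₂ * 𝒟.D β))) : A[X]) =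
      -(C (𝒟.D α₂) * C (𝒟.D β) - C α₂ * C (𝒟.D (𝒟.D β))) := by
    rw [hE12]; simp only [Polynomial.C_neg, Polynomial.C_sub, Polynomial.C_mul]
  have pE21 : (C (𝒟.D (β * 𝒟.D α₂)) : A[X]) =
      C (𝒟.D β) * C (𝒟.D α₂) - C β * C (𝒟.D (𝒟.D α₂)) := by
    rw [hE21]; simp only [Polynomial.C_sub, Polynomial.C_mul]
  have pE22A : (C (𝒟.D (-p₂ ^ 2)) : A[X]) = 0 := by rw [hE22A, Polynomial.C_0]
  have hE2 : E2poly (fun a => 𝒟.D a) p₂ α₂ β =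
      !![C (1 - α₂*β), C (𝒟.D α₂), C (-α₂) * X^1;
         C (𝒟.D β), C ((1+α₂*β)*(𝒟.D α₂*𝒟.D β - p₂^2)) + C (1+α₂*β) * X^2, C (-(α₂*𝒟.D β)) * X^1;
         C β * X^1, C (β*𝒟.D α₂) * X^1, C (-(p₂^2)) + C (1+α₂*β) * X^2] := by
    have e00 : (1 : A[X]) - C α₂ * C β = C (1 - α₂*β) := by
      rw [_root_.map_sub, _root_.map_mul, Polynomial.C_1]
    have e02 : -((X : A[X]) * C α₂) = C (-α₂) * X^1 := by
      rw [_root_.map_neg, pow_one, neg_mul, X_mul_C]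
    have e11 : ((1 : A[X]) + C α₂ * C β) * (X^2 - C p₂^2 + C (𝒟.D α₂) * C (𝒟.D β)) =
        C ((1+α₂*β)*(𝒟.D α₂*𝒟.D β - p₂^2)) + C (1+α₂*β) * X^2 := by
      simp only [_root_.map_add, _root_.map_sub, _root_.map_mul, Polynomial.C_1, _root_.map_pow]
      noncomm_ring
    have e12 : -((X : A[X]) * (C α₂ * C (𝒟.D β))) = C (-(α₂*𝒟.D β)) * X^1 := by
      rw [_root_.map_neg, _root_.map_mul, pow_one, neg_mul, X_mul]
    have e20 : (X : A[X]) * C β = C β * X^1 := by rw [pow_one, X_mul]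
    have e21 : (X : A[X]) * (C β * C (𝒟.D α₂)) = C (β*𝒟.D α₂) * X^1 := by
      rw [_root_.map_mul, pow_one, X_mul]
    have e22 : (X : A[X])^2 * (1 + C α₂ * C β) - C p₂^2 =
        C (-(p₂^2)) + C (1+α₂*β) * X^2 := by
      rw [X_pow_mul]
      simp only [_root_.map_add, _root_.map_neg, _root_.map_mul, Polynomial.C_1, _root_.map_pow]
      noncomm_ring
    unfold E2poly E2gen
    rw [e00, e02, e11, e12, e20, e21, e22]
  have hLab : Lpoly α β = !![0, C α, 0; C β, 0, (X : A[X]); 0, (X : A[X]), 0] := rfl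
  have hLcd : Lpoly α₂ β₂ = !![0, C α₂, 0; C β₂, 0, (X : A[X]); 0, (X : A[X]), 0] := rfl
  have hD0 : 𝒟.D 0 = 0 := _root_.map_zero _
  have hDadd : ∀ x y : A, 𝒟.D (x + y) = 𝒟.D x + 𝒟.D y := fun x y => _root_.map_add _ x y
  rw [hE2, hLab, hLcd, mapM3, sdagM, Matrix.mul_fin_three, Matrix.mul_fin_three, addM, subM]
  simp only [cwise_C (fun a => 𝒟.D a) hD0, cwise_CXpow (fun a => 𝒟.D a) hD0,
    cwise_add (fun a => 𝒟.D a) hD0 hDadd,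
    m0, m1, m2, m3, q1, q2, q3, q4, mul_zero, zero_mul, add_zero, zero_add, mul_one, one_mul,
    add_mul, mul_add, neg_mul, mul_neg, neg_neg, Nat.reduceAdd]
  constructor
  · intro h
    have e01 := congrFun (congrFun h 0) 1
    have e10 := congrFun (congrFun h 1) 0
    simp only [Matrix.cons_val', Matrix.cons_val_zero, Matrix.cons_val_one, Matrix.head_cons,
      Matrix.head_fin_const, Matrix.empty_val', Matrix.cons_val_fin_one, Matrix.of_apply,
      Matrix.zero_apply] at e01 e10
    have s01 := congrArg (fun q => Polynomial.coeff q 0) e01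
    have s10 := congrArg (fun q => Polynomial.coeff q 0) e10
    simp only [Polynomial.coeff_add, Polynomial.coeff_sub, Polynomial.coeff_neg,
      Polynomial.coeff_C_mul, Polynomial.coeff_X_pow, Polynomial.coeff_zero,
      Polynomial.coeff_C_zero, Polynomial.coeff_one_zero, mul_zero, mul_one, add_zero, zero_add,
      neg_zero, sub_zero, mul_ite, if_false, Nat.zero_ne_one, OfNat.zero_ne_ofNat,
      Polynomial.coeff_C, ↓reduceIte] at s01 s10
    constructor
    · -- goal A
      linear_combination (norm := noncomm_ring) - α * (nac_cb) - β * (nac_ca) + (nac_ba) * α₂ + (nac_cb) * α + (zq_c) * β * (𝒟.D α₂) * (𝒟.D β) - (zq_c) * β * p₂ * p₂ + s01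
    · -- goal B
      have s10p : β₂ = 𝒟.D (𝒟.D β) + ((𝒟.D α₂ * 𝒟.D β - p₂ ^ 2) * β +
          α₂ * β * (𝒟.D α₂ * 𝒟.D β - p₂ ^ 2) * β) + β₂ * (α₂ * β) := by
        linear_combination (norm := noncomm_ring) -s10
      linear_combination (norm := noncomm_ring) (𝒟.D β) * (ev_C β) - (2:A) * (β * α₂ * (ev_B β) * (𝒟.D α₂)) - (2:A) * (β * α₂ * (ev_C (𝒟.D β)) * β) + (2:A) * (β * α₂ * (ev_p β) * p₂) - β * α₂ * (nac_dc) * β - β * α₂ * (s10p) - (2:A) * (β * α₂ * (𝒟.D β) * (ev_C β)) + (2:A) * (β * α₂ * p₂ * (ev_p β)) - β * (ev_C (𝒟.D β)) - (2:A) * (β * (nac_cb) * (𝒟.D β) * (𝒟.D α₂)) + (2:A) * (β * (nac_cb) * p₂ * p₂) - β * (zq_c) * β * (𝒟.D α₂) * (𝒟.D β) * β + β * (zq_c) * β * p₂ * p₂ * β + β * (zq_c) * β₂ * β - α₂ * (nac_db) + α₂ * (nac_xbb) - p₂ * (ev_p β) + (ev_B β) * (𝒟.D α₂) + (ev_C (𝒟.D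 β)) * β - (ev_p β) * p₂ + (nac_cb) * (𝒟.D α₂) * (𝒟.D β) * β + (nac_cb) * β₂ - (nac_cb) * p₂ * p₂ * β - (nac_cb) * (𝒟.D (𝒟.D β)) + (nac_dc) * β - (nac_xbc) * β + (s10p) + (2:A) * ((zq_b) * α₂ * (𝒟.D β) * (𝒟.D α₂)) - (2:A) * ((zq_b) * α₂ * p₂ * p₂)
  · rintro ⟨h1, h2⟩
    have ph1 : (C (𝒟.D (𝒟.D α₂)) : A[X]) =
        C α * (C α₂ * C β - 1) + C α₂ * (C (𝒟.D α₂) * C (𝒟.D β) - C p₂ ^ 2) := by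
      rw [h1]; simp only [Polynomial.C_add, Polynomial.C_sub, Polynomial.C_mul, Polynomial.C_neg,
        Polynomial.C_pow, Polynomial.C_1]
    have ph2 : (C β₂ : A[X]) = C (𝒟.D (𝒟.D β)) + C (𝒟.D (𝒟.D β)) * (C α₂ * C β) +
        C β * (C (𝒟.D α₂) * C (𝒟.D β) - C p₂ ^ 2) := by
      rw [h2]; simp only [Polynomial.C_add, Polynomial.C_sub, Polynomial.C_mul, Polynomial.C_neg,
        Polynomial.C_pow, Polynomial.C_1]
    rw [zeroM]
    apply eqM
    case h1 =>
      simp only [Polynomial.C_add, Polynomial.C_sub, Polynomial.C_mul, Polynomial.C_neg,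
        Polynomial.C_pow, Polynomial.C_1]
      linear_combination (norm := noncomm_ring) (pE00)
    case h2 =>
      simp only [Polynomial.C_add, Polynomial.C_sub, Polynomial.C_mul, Polynomial.C_neg,
        Polynomial.C_pow, Polynomial.C_1]
      linear_combination (norm := noncomm_ring) (C α) * (pac_cb) + (C β) * (pac_ca) - (pac_ba) * (C α₂) - (pac_cb) * (C α) + (ph1) - (pzq_c) * (C β) * (C (𝒟.D α₂)) * (C (𝒟.D β)) + (pzq_c) * (C β) * (C p₂) * (C p₂) - ((pzq_c) * (C β)) * X ^ 2
    case h3 =>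
      simp only [Polynomial.C_add, Polynomial.C_sub, Polynomial.C_mul, Polynomial.C_neg,
        Polynomial.C_pow, Polynomial.C_1]
      linear_combination (norm := noncomm_ring) ((pE02)) * X ^ 1 + ((pzq_c) * (C (𝒟.D β))) * X ^ 1
    case h4 =>
      simp only [Polynomial.C_add, Polynomial.C_sub, Polynomial.C_mul, Polynomial.C_neg,
        Polynomial.C_pow, Polynomial.C_1]
      linear_combination (norm := noncomm_ring) (C (𝒟.D β)) * (pev_C β) + (C β) * (C (𝒟.D β)) * (pev_C α₂) * (C β) - (C β) * (C α₂) * (pac_xbc) * (C β) - (C β) * (C α₂) * (pev_C (𝒟.D β)) * (C β) - (C β) * (C p₂) * (pev_p α₂) * (C β) + (C β) * (pev_B α₂) * (C (𝒟.D α₂)) * (C β) + (C β) * (pev_C (𝒟.D β)) * (C α₂) * (C β) - (C β) * (pev_C (𝒟.D β)) - (C β) * (pev_p α₂) * (C p₂) * (C β) + (C β) * (pzq_c) * (C (𝒟.D (𝒟.D β))) * (C β) - (C α₂) * (pac_xbb) * (C α₂) * (C β) - (C p₂) * (pev_p β) + (pac_cb) * (C (𝒟.D α₂)) * (C (𝒟.D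 β)) * (C β) - (pac_cb) * (C p₂) * (C p₂) * (C β) + (pac_cb) * (C (𝒟.D (𝒟.D β))) * (C α₂) * (C β) + (pac_xbc) * (C β) * (C α₂) * (C β) + (pev_B β) * (C (𝒟.D α₂)) + (pev_C (𝒟.D β)) * (C β) - (pev_p β) * (C p₂) + (ph2) * (C α₂) * (C β) - (ph2) - ((C β) * (pac_cb)) * X ^ 2 + ((pac_cb) * (C β)) * X ^ 2 + ((pzq_b) * (C α₂)) * X ^ 2
    case h5 =>
      simp only [Polynomial.C_add, Polynomial.C_sub, Polynomial.C_mul, Polynomial.C_neg,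
        Polynomial.C_pow, Polynomial.C_1]
      linear_combination (norm := noncomm_ring) - (C α) * (C β) * (pzq_c) * (C β) * (C (𝒟.D β)) + (C α) * (pac_cb) * (C (𝒟.D β)) + (C β) * (C (𝒟.D α₂)) * (pev_C (𝒟.D β)) - (C β) * (C α₂) * (pev_C (𝒟.D (𝒟.D β))) + (C β) * (C p₂) * (pev_p (𝒟.D α₂)) + (C β) * (pac_ca) * (C (𝒟.D β)) - (C β) * (pac_ca) * (C α₂) * (C β) * (C (𝒟.D β)) + (C β) * (pev_p (𝒟.D α₂)) * (C p₂) - (C β) * (pzq_c) * (C (𝒟.D α₂)) * (C (𝒟.D β)) * (C (𝒟.D β)) + (C β) * (pzq_c) * (C p₂) * (C p₂) * (C (𝒟.D β)) + (C α₂) * (C β) * (ph1) * (C (𝒟.D β)) - (C α₂) * (C p₂) * (pev_p (𝒟.D β)) + (C α₂) * (pac_xbb) * (C (𝒟.D α₂)) + (C α₂) * (pev_C (𝒟.D β)) * (C (𝒟.D β)) - (C α₂) * (pev_p (𝒟.D β)) * (C p₂) + (pE11A) - (pac_ba) * (C α₂) * (C (𝒟.D β)) + (pac_ba) * (C α₂)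 * (C α₂) * (C β) * (C (𝒟.D β)) + (pac_cb) * (C (𝒟.D α₂)) * (C (𝒟.D (𝒟.D β))) - (pac_cb) * (C α) * (C (𝒟.D β)) + (pac_cb) * (C α) * (C α₂) * (C β) * (C (𝒟.D β)) + (pac_cb) * (C α₂) * (C (𝒟.D α₂)) * (C (𝒟.D β)) * (C (𝒟.D β)) - (pac_cb) * (C α₂) * (C p₂) * (C p₂) * (C (𝒟.D β)) - (pac_cb) * (C (𝒟.D (𝒟.D β))) * (C (𝒟.D α₂)) - (pac_xbc) * (C β) * (C (𝒟.D α₂)) + (pev_B α) + (pev_C (𝒟.D (𝒟.D β))) + (pev_C β) * (C (𝒟.D α₂)) * (C (𝒟.D β)) - (pev_C β) * (C p₂) * (C p₂) + (ph1) * (C (𝒟.D β)) - (ph2) * (C (𝒟.D α₂)) + ((pE11B)) * X ^ 2 + ((pev_C β)) * X ^ 2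
    case h6 =>
      simp only [Polynomial.C_add, Polynomial.C_sub, Polynomial.C_mul, Polynomial.C_neg,
        Polynomial.C_pow, Polynomial.C_1]
      linear_combination (norm := noncomm_ring) ((C β) * (C (𝒟.D β)) * (pev_C α₂)) * X ^ 1 - ((C β) * (C α₂) * (pac_xbc)) * X ^ 1 - ((C β) * (C α₂) * (pev_C (𝒟.D β))) * X ^ 1 - ((C β) * (C p₂) * (pev_p α₂)) * X ^ 1 + ((C β) * (pev_B α₂) * (C (𝒟.D α₂))) * X ^ 1 + ((C β) * (pev_C (𝒟.D β)) * (C α₂)) * X ^ 1 - ((C β) * (pev_p α₂) * (C p₂)) * X ^ 1 + ((C β) * (pzq_c) * (C (𝒟.D (𝒟.D β)))) * X ^ 1 - ((C α₂) * (pac_xbb) * (C α₂)) * X ^ 1 + ((pE12)) * X ^ 1 + ((pac_cb) * (C (𝒟.D α₂)) * (C (𝒟.D β))) * X ^ 1 - ((pac_cb) * (C p₂) * (C p₂)) * X ^ 1 + ((pac_cb) * (C (𝒟.D (𝒟.D β))) * (C α₂)) * X ^ 1 + ((pac_xbc) * (C β) * (C α₂)) * X ^ 1 + ((pac_xbc))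 * X ^ 1 + ((ph2) * (C α₂)) * X ^ 1
    case h7 =>
      simp only [Polynomial.C_add, Polynomial.C_sub, Polynomial.C_mul, Polynomial.C_neg,
        Polynomial.C_pow, Polynomial.C_1]
      linear_combination (norm := noncomm_ring) - ((C β) * (pev_C β)) * X ^ 1 - ((pzq_b) * (C (𝒟.D α₂))) * X ^ 1
    case h8 =>
      simp only [Polynomial.C_add, Polynomial.C_sub, Polynomial.C_mul, Polynomial.C_neg,
        Polynomial.C_pow, Polynomial.C_1]
      linear_combination (norm := noncomm_ring) ((C α) * (C β) * (pac_cb)) * X ^ 1 - ((C α) * (pzq_b) * (C α₂)) * X ^ 1 - ((C β) * (ph1)) * X ^ 1 + ((pE21)) * X ^ 1 - ((pac_ba) * (C α₂) * (C β)) * X ^ 1 - ((pac_cb) * (C (𝒟.D α₂)) * (C (𝒟.D β))) * X ^ 1 + ((pac_cb) * (C p₂) * (C p₂)) * X ^ 1 - ((pev_C (𝒟.D β))) * X ^ 1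
    case h9 =>
      simp only [Polynomial.C_add, Polynomial.C_sub, Polynomial.C_mul, Polynomial.C_neg,
        Polynomial.C_pow, Polynomial.C_1]
      linear_combination (norm := noncomm_ring) (pE22A) + ((pE11B)) * X ^ 2 + ((pev_C β)) * X ^ 2
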